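/- arXiv:2002.08056 — 4 statements merged into one kernel-verified Lean document; each statement's English description precedes it below -/
import Mathlib

section
/- Let H ∈ ℝ^{d×d} be symmetric positive semi-definite, and let l_1, …, l_d ≥ 0 be such that diag(l_1, …, l_d) − H is positive semi-definite. Then ‖H‖_{∞,1} := max_{‖x‖_∞ ≤ 1} ‖H x‖_1 ≤ Σ_{i=1}^d l_i. In particular L_∞(H) ≤ L_sep(H), where L_sep(H) is the infimum of Σ_i l_i over all nonnegative l_1, …, l_d with H ⪯ diag(l_1, …, l_d). -/
open scoped BigOperators
open scoped Matrix

/-- The matrix norm `‖H‖_{∞,1} = max_{‖x‖_∞ ≤ 1} ‖H x‖_1`. -/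
noncomputable def normInftyOne {d : ℕ} (H : Matrix (Fin d) (Fin d) ℝ) : ℝ :=
  sSup ((fun x : Fin d → ℝ => ∑ i, |H.mulVec x i|) '' {x | ∀ i, |x i| ≤ 1})

/-- `L_sep(H)` is the infimum of `∑ i, l i` over nonnegative `l` with
`H ⪯ diag l`, i.e. with `diag l - H` positive semi-definite. -/
noncomputable def Lsep {d : ℕ} (H : Matrix (Fin d) (Fin d) ℝ) : ℝ :=
  sInf {s : ℝ | ∃ l : Fin d → ℝ, (∀ i, 0 ≤ l i) ∧
    (Matrix.diagonal l - H).PosSemidef ∧ s = ∑ i, l i}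

lemma key_bound {d : ℕ}
    (H : Matrix (Fin d) (Fin d) ℝ) (hpsd : H.PosSemidef)
    (l : Fin d → ℝ) (hl : ∀ i, 0 ≤ l i)
    (hdom : (Matrix.diagonal l - H).PosSemidef) :
    normInftyOne H ≤ ∑ i, l i := by
  apply Real.sSup_le
  · rintro v ⟨x, hx, rfl⟩
    simp only [Set.mem_setOf_eq] at hx
    set s : Fin d → ℝ := fun i => if 0 ≤ H.mulVec x i then 1 else -1 with hs
    have hs1 : ∀ i, |s i| ≤ 1 := by
      intro i; simp only [hs]; split <;> simp
    have habs : ∀ i, |H.mulVec x i| = s i * H.mulVec x i := by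
      intro i; simp only [hs]
      rcases le_or_gt 0 (H.mulVec x i) with h | h
      · rw [if_pos h, abs_of_nonneg h]; ring
      · rw [if_neg (not_le.mpr h), abs_of_neg h]; ring
    have quad : ∀ y : Fin d → ℝ, (∀ i, |y i| ≤ 1) → y ⬝ᵥ H.mulVec y ≤ ∑ i, l i := by
      intro y hy
      have h := hdom.dotProduct_mulVec_nonneg y
      simp only [Matrix.sub_mulVec, dotProduct_sub, star_trivial] at h
      have hdiag : y ⬝ᵥ (Matrix.diagonal l).mulVec y = ∑ i, l i * (y i)^2 := by
        simp [dotProduct, Matrix.mulVec_diagonal]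
        apply Finset.sum_congr rfl
        intro i _; ring
      have hle : ∑ i, l i * (y i)^2 ≤ ∑ i, l i := by
        apply Finset.sum_le_sum
        intro i _
        have h2 : (y i)^2 ≤ 1 := by
          have := sq_abs (y i)
          nlinarith [hy i, abs_nonneg (y i)]
        nlinarith [hl i]
      rw [hdiag] at h
      linarith
    have hsym : x ⬝ᵥ H.mulVec s = s ⬝ᵥ H.mulVec x := by
      rw [Matrix.dotProduct_mulVec, ← Matrix.mulVec_transpose]
      have hH : H.transpose = H := by
        have := hpsd.1
        rwa [Matrix.IsHermitian, Matrix.conjTranspose_eq_transpose_of_trivial] at this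
      rw [hH, dotProduct_comm]
    have cross : 2 * (s ⬝ᵥ H.mulVec x) ≤ s ⬝ᵥ H.mulVec s + x ⬝ᵥ H.mulVec x := by
      have h := hpsd.dotProduct_mulVec_nonneg (s - x)
      simp only [Matrix.sub_mulVec, Matrix.mulVec_sub, sub_dotProduct,
        dotProduct_sub, star_trivial] at h
      linarith
    have heq : ∑ i, |H.mulVec x i| = s ⬝ᵥ H.mulVec x := by
      simp only [dotProduct]
      exact Finset.sum_congr rfl fun i _ => habs i
    dsimp only
    rw [heq]
    have q1 := quad s hs1
    have q2 := quad x hx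
    linarith
  · exact Finset.sum_nonneg fun i _ => hl i

/-- If `H` is symmetric positive semi-definite and `diag l - H` is positive semi-definite
with `l i ≥ 0`, then `‖H‖_{∞,1} ≤ ∑ i, l i`; in particular `‖H‖_{∞,1} ≤ L_sep(H)`. -/
theorem normInftyOne_le_sum_diag_bound {d : ℕ}
    (H : Matrix (Fin d) (Fin d) ℝ) (hpsd : H.PosSemidef)
    (l : Fin d → ℝ) (hl : ∀ i, 0 ≤ l i)
    (hdom : (Matrix.diagonal l - H).PosSemidef) :
    normInftyOne H ≤ ∑ i, l i ∧ normInftyOne H ≤ Lsep H := by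
  refine ⟨key_bound H hpsd l hl hdom, ?_⟩
  refine le_csInf ⟨∑ i, l i, ⟨l, hl, hdom, rfl⟩⟩ ?_
  rintro b ⟨l', hl', hdom', rfl⟩
  exact key_bound H hpsd l' hl' hdom'
end

section
/- Let H ∈ ℝ^{d×d} be nonzero, symmetric positive semi-definite, and let B_1, …, B_b be a partition of {1, …, d}. Define ‖x‖^B_∞ := max_k ‖x_{B_k}‖_2 and ‖x‖^B_1 := Σ_k ‖x_{B_k}‖_2, where x_{B_k} is the subvector of x on the index set B_k. Then ‖H‖^B_{∞,1} := max_{‖x‖^B_∞ ≤ 1} ‖H x‖^B_1 ≤ (ρ^B_diag(H))^{-1} Σ_k λ_max(H_{B_k B_k}), where H_{B_k B_l} is the submatrix of H with rows in B_k and columns in B_l, λ_max denotes the largest eigenvalue, and ρ^B_diag(H) := (Σ_k ‖H_{B_k B_k}‖_2) / (Σ_{k,l} ‖H_{B_k B_l}‖_2) with ‖·‖_2 the spectral norm. -/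
open scoped BigOperators

/-- The spectral norm of a rectangular real matrix,
`‖M‖₂ = sup_{‖x‖₂ ≤ 1} ‖M x‖₂`. -/
noncomputable def specNorm {m n : Type*} [Fintype m] [Fintype n] (M : Matrix m n ℝ) : ℝ :=
  sSup ((fun x : n → ℝ => Real.sqrt (∑ i, (M.mulVec x) i ^ 2)) '' {x | ∑ j, x j ^ 2 ≤ 1})

/-- Given a block structure `P : Fin d → Fin b` (coordinate `i` belongs to block `P i`),
the block matrix norm `‖H‖^B_{∞,1} = max_{‖x‖^B_∞ ≤ 1} ‖H x‖^B_1`, where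
`‖x‖^B_∞ = max_k ‖x_{B_k}‖₂` and `‖x‖^B_1 = ∑_k ‖x_{B_k}‖₂`. -/
noncomputable def blockNormInftyOne {d b : ℕ} (P : Fin d → Fin b)
    (H : Matrix (Fin d) (Fin d) ℝ) : ℝ :=
  sSup ((fun x : Fin d → ℝ =>
      ∑ k, Real.sqrt (∑ i ∈ Finset.univ.filter (fun i => P i = k), (H.mulVec x) i ^ 2)) ''
    {x | ∀ k, Real.sqrt (∑ i ∈ Finset.univ.filter (fun i => P i = k), x i ^ 2) ≤ 1})

/-- The block diagonal concentration
`ρ^B_diag(H) = (∑_k ‖H_{B_k B_k}‖₂) / (∑_{k,l} ‖H_{B_k B_l}‖₂)`. -/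
noncomputable def rhoBlockDiag {d b : ℕ} (P : Fin d → Fin b)
    (H : Matrix (Fin d) (Fin d) ℝ) : ℝ :=
  (∑ k, specNorm (H.submatrix (Subtype.val : {i // P i = k} → Fin d)
      (Subtype.val : {i // P i = k} → Fin d))) /
  (∑ k, ∑ l, specNorm (H.submatrix (Subtype.val : {i // P i = k} → Fin d)
      (Subtype.val : {i // P i = l} → Fin d)))

noncomputable def eNorm {ι : Type*} [Fintype ι] (v : ι → ℝ) : ℝ := Real.sqrt (∑ i, v i ^ 2)

lemma eNorm_eq_norm {ι : Type*} [Fintype ι] (v : ι → ℝ) :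
    eNorm v = ‖(EuclideanSpace.equiv ι ℝ).symm v‖ := by
  rw [EuclideanSpace.norm_eq]
  simp [eNorm, Real.norm_eq_abs, sq_abs]

lemma eNorm_nonneg {ι : Type*} [Fintype ι] (v : ι → ℝ) : 0 ≤ eNorm v := Real.sqrt_nonneg _

lemma eNorm_sum_le {ι κ : Type*} [Fintype ι] [Fintype κ] (v : κ → ι → ℝ) :
    eNorm (∑ l, v l) ≤ ∑ l, eNorm (v l) := by
  simp_rw [eNorm_eq_norm]
  rw [map_sum]
  exact norm_sum_le _ _


section specNorm
variable {m n : Type*} [Fintype m] [Fintype n] (M : Matrix m n ℝ)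

lemma specNorm_bddAbove :
    BddAbove ((fun x : n → ℝ => Real.sqrt (∑ i, (M.mulVec x) i ^ 2)) '' {x | ∑ j, x j ^ 2 ≤ 1}) := by
  refine ⟨Real.sqrt (∑ i, ∑ j, M i j ^ 2), ?_⟩
  rintro y ⟨x, hx, rfl⟩
  apply Real.sqrt_le_sqrt
  refine Finset.sum_le_sum fun i _ => ?_
  have h1 : (M.mulVec x) i ^ 2 ≤ (∑ j, M i j ^ 2) * (∑ j, x j ^ 2) := by
    simpa [Matrix.mulVec, dotProduct] using
      Finset.sum_mul_sq_le_sq_mul_sq Finset.univ (fun j => M i j) x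
  calc (M.mulVec x) i ^ 2 ≤ (∑ j, M i j ^ 2) * (∑ j, x j ^ 2) := h1
    _ ≤ (∑ j, M i j ^ 2) * 1 := by
        exact mul_le_mul_of_nonneg_left hx (Finset.sum_nonneg fun j _ => sq_nonneg _)
    _ = ∑ j, M i j ^ 2 := mul_one _

lemma le_specNorm {x : n → ℝ} (hx : ∑ j, x j ^ 2 ≤ 1) :
    Real.sqrt (∑ i, (M.mulVec x) i ^ 2) ≤ specNorm M :=
  le_csSup (specNorm_bddAbove M) ⟨x, hx, rfl⟩

lemma specNorm_nonneg : 0 ≤ specNorm M := by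
  have h := le_specNorm M (x := 0) (by simp)
  exact le_trans (Real.sqrt_nonneg _) h

lemma eNorm_mulVec_le (x : n → ℝ) :
    eNorm (M.mulVec x) ≤ specNorm M * eNorm x := by
  have hsum : (eNorm x) ^ 2 = ∑ j, x j ^ 2 :=
    Real.sq_sqrt (Finset.sum_nonneg fun j _ => sq_nonneg _)
  rcases eq_or_lt_of_le (eNorm_nonneg x) with h0 | h0
  · have hx : x = 0 := by
      funext j
      have h2 : ∑ j, x j ^ 2 = 0 := by rw [← hsum, ← h0]; ring
      have := (Finset.sum_eq_zero_iff_of_nonneg (fun j _ => sq_nonneg (x j))).mp h2 j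
        (Finset.mem_univ j)
      exact pow_eq_zero_iff (n := 2) (by norm_num) |>.mp this
    simp [hx, eNorm, ← h0, Matrix.mulVec_zero]
  · set c := (eNorm x)⁻¹ with hc
    have hc0 : 0 < c := inv_pos.mpr h0
    have hx1 : ∑ j, (c • x) j ^ 2 ≤ 1 := by
      have : ∑ j, (c • x) j ^ 2 = c ^ 2 * ∑ j, x j ^ 2 := by
        simp [Finset.mul_sum, mul_pow]
      rw [this, ← hsum, hc]
      rw [inv_pow, inv_mul_cancel₀ (by positivity)]
    have h2 := le_specNorm M hx1
    have h3 : Real.sqrt (∑ i, (M.mulVec (c • x)) i ^ 2) = c * eNorm (M.mulVec x) := by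
      rw [Matrix.mulVec_smul]
      have : eNorm (c • M.mulVec x) = |c| * eNorm (M.mulVec x) := by
        simp_rw [eNorm_eq_norm, map_smul, norm_smul, Real.norm_eq_abs]
      simpa [eNorm, abs_of_pos hc0] using this
    rw [h3] at h2
    have := mul_le_mul_of_nonneg_left h2 (le_of_lt h0)
    rw [← mul_assoc, mul_inv_cancel₀ (ne_of_gt h0), one_mul] at this
    linarith [this]

lemma abs_le_specNorm [DecidableEq n] (i : m) (j : n) : |M i j| ≤ specNorm M := by
  have hx : ∑ j' : n, (fun j' => if j' = j then (1 : ℝ) else 0) j' ^ 2 ≤ 1 := by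
    simp [ite_pow, Finset.sum_ite_eq']
  refine le_trans ?_ (le_specNorm M hx)
  have h2 : ∑ i', (M.mulVec (fun j' => if j' = j then (1 : ℝ) else 0)) i' ^ 2
      = ∑ i', M i' j ^ 2 :=
    Finset.sum_congr rfl fun i' _ => by
      simp [Matrix.mulVec, dotProduct, mul_ite, Finset.sum_ite_eq']
  rw [h2]
  calc |M i j| = Real.sqrt ((M i j) ^ 2) := (Real.sqrt_sq_eq_abs _).symm
    _ ≤ _ := Real.sqrt_le_sqrt
        (Finset.single_le_sum (f := fun i' => (M i' j) ^ 2) (fun _ _ => sq_nonneg _)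
          (Finset.mem_univ i))
end specNorm

section spectral
open Matrix
variable {n : Type*} [Fintype n] [DecidableEq n]

lemma sum_sq_mulVec_of_unitary {U : Matrix n n ℝ} (hU : U ∈ Matrix.unitaryGroup n ℝ)
    (v : n → ℝ) : ∑ i, (U.mulVec v) i ^ 2 = ∑ i, v i ^ 2 := by
  have h1 : star U * U = 1 := Matrix.mem_unitaryGroup_iff'.mp hU
  have hmv : U.mulVec v = v ᵥ* (star U) := by
    have : (star U : Matrix n n ℝ) = Uᵀ := by
      ext a c
      simp [Matrix.star_eq_conjTranspose, Matrix.conjTranspose_apply]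
    rw [this, Matrix.vecMul_transpose]
  have key : (U.mulVec v) ⬝ᵥ (U.mulVec v) = v ⬝ᵥ v := by
    calc (U.mulVec v) ⬝ᵥ (U.mulVec v)
        = ((U.mulVec v) ᵥ* U) ⬝ᵥ v := Matrix.dotProduct_mulVec _ _ _
      _ = v ⬝ᵥ v := by rw [hmv, Matrix.vecMul_vecMul, h1, Matrix.vecMul_one]
  simpa [dotProduct, pow_two] using key

lemma specNorm_le_iSup_eigenvalues [Nonempty n]
    {M : Matrix n n ℝ} (h : M.PosSemidef) :
    specNorm M ≤ ⨆ j, h.1.eigenvalues j := by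
  classical
  set L := ⨆ j, h.1.eigenvalues j with hL
  have hle : ∀ j, h.1.eigenvalues j ≤ L := fun j =>
    le_ciSup (Set.Finite.bddAbove (Set.finite_range _)) j
  have hLnn : 0 ≤ L := le_trans (h.eigenvalues_nonneg (Classical.arbitrary n)) (hle _)
  refine Real.sSup_le ?_ hLnn
  rintro y ⟨x, hx, rfl⟩
  simp only [Set.mem_setOf_eq] at hx
  -- spectral decomposition
  have hA := h.1
  set U : Matrix n n ℝ := (hA.eigenvectorUnitary : Matrix n n ℝ) with hU
  have hUmem : U ∈ Matrix.unitaryGroup n ℝ := (hA.eigenvectorUnitary).2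
  have hUstar : star U ∈ Matrix.unitaryGroup n ℝ := Unitary.star_mem hUmem
  set yv : n → ℝ := (star U).mulVec x with hyv
  have hyx : ∑ i, yv i ^ 2 = ∑ j, x j ^ 2 := sum_sq_mulVec_of_unitary hUstar x
  have hdiag : (Matrix.diagonal (RCLike.ofReal ∘ hA.eigenvalues) : Matrix n n ℝ)
      = Matrix.diagonal hA.eigenvalues := by
    congr 1
  have hMx : M.mulVec x = U.mulVec ((Matrix.diagonal hA.eigenvalues).mulVec yv) := by
    conv_lhs => rw [hA.spectral_theorem, Unitary.conjStarAlgAut_apply]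
    rw [hdiag, ← Matrix.mulVec_mulVec, ← Matrix.mulVec_mulVec]
  have hsum1 : ∑ i, (M.mulVec x) i ^ 2
      = ∑ i, ((Matrix.diagonal hA.eigenvalues).mulVec yv) i ^ 2 := by
    rw [hMx]; exact sum_sq_mulVec_of_unitary hUmem _
  have hsum2 : ∑ i, ((Matrix.diagonal hA.eigenvalues).mulVec yv) i ^ 2
      ≤ L ^ 2 * ∑ i, yv i ^ 2 := by
    rw [Finset.mul_sum]
    refine Finset.sum_le_sum fun i _ => ?_
    rw [Matrix.mulVec_diagonal, mul_pow]
    have h1 : hA.eigenvalues i ^ 2 ≤ L ^ 2 :=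
      pow_le_pow_left₀ (h.eigenvalues_nonneg i) (hle i) 2
    exact mul_le_mul_of_nonneg_right h1 (sq_nonneg _)
  have hfin : ∑ i, (M.mulVec x) i ^ 2 ≤ L ^ 2 := by
    rw [hsum1]
    calc ∑ i, ((Matrix.diagonal hA.eigenvalues).mulVec yv) i ^ 2
        ≤ L ^ 2 * ∑ i, yv i ^ 2 := hsum2
      _ = L ^ 2 * ∑ j, x j ^ 2 := by rw [hyx]
      _ ≤ L ^ 2 * 1 := mul_le_mul_of_nonneg_left hx (sq_nonneg _)
      _ = L ^ 2 := mul_one _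
  calc Real.sqrt (∑ i, (M.mulVec x) i ^ 2) ≤ Real.sqrt (L ^ 2) := Real.sqrt_le_sqrt hfin
    _ = L := by rw [Real.sqrt_sq hLnn]

end spectral


set_option maxHeartbeats 2000000 in
/-- For a nonzero positive semi-definite `H` and a partition of the coordinates into
blocks (given by a surjective `P : Fin d → Fin b`),
`‖H‖^B_{∞,1} ≤ (ρ^B_diag(H))⁻¹ * ∑_k λ_max(H_{B_k B_k})`. -/
theorem blockNormInftyOne_le_rhoBlockDiag_inv_mul_sum_lambdaMax {d b : ℕ}
    (H : Matrix (Fin d) (Fin d) ℝ) (hne : H ≠ 0) (hpsd : H.PosSemidef)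
    (P : Fin d → Fin b) (hP : Function.Surjective P) :
    blockNormInftyOne P H ≤ (rhoBlockDiag P H)⁻¹ *
      ∑ k, ⨆ j, ((hpsd.submatrix (Subtype.val : {i // P i = k} → Fin d)).1.eigenvalues j) := by
  have hblock : ∀ k : Fin b, Nonempty {i // P i = k} := fun k => (hP k).elim fun i hi => ⟨⟨i, hi⟩⟩
  set Hb : (k : Fin b) → (l : Fin b) → Matrix {i // P i = k} {i // P i = l} ℝ := fun k l =>
    H.submatrix (Subtype.val : {i // P i = k} → Fin d)
      (Subtype.val : {i // P i = l} → Fin d) with hHb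
  have hSd0 : 0 ≤ ∑ k, specNorm (Hb k k) := Finset.sum_nonneg fun k _ => specNorm_nonneg _
  -- some diagonal entry is positive
  have hdiagpos : ∃ i, 0 < H i i := by
    by_contra hc
    push_neg at hc
    apply hne
    refine (Matrix.PosSemidef.trace_eq_zero_iff hpsd).mp ?_
    exact le_antisymm (Finset.sum_nonpos fun i _ => hc i) hpsd.trace_nonneg
  obtain ⟨i0, hi0⟩ := hdiagpos
  have hSdpos : 0 < ∑ k, specNorm (Hb k k) := by
    have h1 : H i0 i0 ≤ specNorm (Hb (P i0) (P i0)) := by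
      have h2 := abs_le_specNorm (Hb (P i0) (P i0)) ⟨i0, rfl⟩ ⟨i0, rfl⟩
      calc H i0 i0 ≤ |H i0 i0| := le_abs_self _
        _ = |(Hb (P i0) (P i0)) ⟨i0, rfl⟩ ⟨i0, rfl⟩| := rfl
        _ ≤ _ := h2
    have h2 : specNorm (Hb (P i0) (P i0)) ≤ ∑ k, specNorm (Hb k k) :=
      Finset.single_le_sum (f := fun k => specNorm (Hb k k))
        (fun k _ => specNorm_nonneg _) (Finset.mem_univ _)
    linarith
  have hSdΛ : ∑ k, specNorm (Hb k k) ≤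
      ∑ k, ⨆ j, ((hpsd.submatrix
        (Subtype.val : {i // P i = k} → Fin d)).1.eigenvalues j) := by
    refine Finset.sum_le_sum fun k _ => ?_
    haveI := hblock k
    exact specNorm_le_iSup_eigenvalues (hpsd.submatrix _)
  have hSdSa : ∑ k, specNorm (Hb k k) ≤ ∑ k, ∑ l, specNorm (Hb k l) :=
    Finset.sum_le_sum fun k _ =>
      Finset.single_le_sum (fun l _ => specNorm_nonneg _) (Finset.mem_univ k)
  have hSa0 : 0 ≤ ∑ k, ∑ l, specNorm (Hb k l) := le_trans hSd0 hSdSa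
  -- the sum over a block as a sum over the subtype
  have hsub : ∀ (l : Fin b) (f : Fin d → ℝ),
      ∑ i ∈ Finset.univ.filter (fun i => P i = l), f i = ∑ i : {i // P i = l}, f i.val :=
    fun l f => Finset.sum_subtype _ (fun i => by simp) f
  -- main bound
  have hmain : blockNormInftyOne P H ≤ ∑ k, ∑ l, specNorm (Hb k l) := by
    refine Real.sSup_le ?_ hSa0
    rintro y ⟨x, hx, rfl⟩
    simp only [Set.mem_setOf_eq] at hx
    refine Finset.sum_le_sum fun k _ => ?_
    have hdecomp : (fun i : {i // P i = k} => (H.mulVec x) i.val)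
        = ∑ l, (fun i : {i // P i = k} =>
            (Hb k l).mulVec (fun j : {j // P j = l} => x j.val) i) := by
      funext i
      rw [Finset.sum_apply]
      have h1 : (H.mulVec x) i.val = ∑ j, H i.val j * x j := by
        simp [Matrix.mulVec, dotProduct]
      rw [h1, ← Finset.sum_fiberwise Finset.univ P (fun j => H i.val j * x j)]
      refine Finset.sum_congr rfl fun l _ => ?_
      rw [hsub l (fun j => H i.val j * x j)]
      simp [hHb, Matrix.mulVec, dotProduct, Matrix.submatrix_apply]
    calc Real.sqrt (∑ i ∈ Finset.univ.filter (fun i => P i = k), (H.mulVec x) i ^ 2)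
        = eNorm (fun i : {i // P i = k} => (H.mulVec x) i.val) := by
          rw [eNorm, hsub k (fun i => (H.mulVec x) i ^ 2)]
      _ ≤ ∑ l, eNorm (fun i : {i // P i = k} =>
            (Hb k l).mulVec (fun j : {j // P j = l} => x j.val) i) := by
          rw [hdecomp]; exact eNorm_sum_le _
      _ ≤ ∑ l, specNorm (Hb k l) := by
          refine Finset.sum_le_sum fun l _ => ?_
          have h2 := eNorm_mulVec_le (Hb k l) (fun j : {j // P j = l} => x j.val)
          have h3 : eNorm (fun j : {j // P j = l} => x j.val) ≤ 1 := by
            have h4 := hx l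
            rw [hsub l (fun j => x j ^ 2)] at h4
            exact h4
          calc eNorm (fun i : {i // P i = k} =>
                (Hb k l).mulVec (fun j : {j // P j = l} => x j.val) i)
              ≤ specNorm (Hb k l) * eNorm (fun j : {j // P j = l} => x j.val) := h2
            _ ≤ specNorm (Hb k l) * 1 :=
                mul_le_mul_of_nonneg_left h3 (specNorm_nonneg _)
            _ = specNorm (Hb k l) := mul_one _
  -- final algebra
  have h4 : (rhoBlockDiag P H)⁻¹
      = (∑ k, ∑ l, specNorm (Hb k l)) / (∑ k, specNorm (Hb k k)) := by
    have h5 : rhoBlockDiag P H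
        = (∑ k, specNorm (Hb k k)) / (∑ k, ∑ l, specNorm (Hb k l)) := rfl
    rw [h5, inv_div]
  rw [h4, div_mul_eq_mul_div, le_div_iff₀ hSdpos]
  calc blockNormInftyOne P H * ∑ k, specNorm (Hb k k)
      ≤ (∑ k, ∑ l, specNorm (Hb k l)) * ∑ k, specNorm (Hb k k) :=
        mul_le_mul_of_nonneg_right hmain hSd0
    _ ≤ (∑ k, ∑ l, specNorm (Hb k l)) *
        ∑ k, ⨆ j, ((hpsd.submatrix
          (Subtype.val : {i // P i = k} → Fin d)).1.eigenvalues j) :=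
        mul_le_mul_of_nonneg_left hSdΛ hSa0
end

section
/- Let ‖·‖ be a norm on ℝ^d with dual norm ‖·‖_*, let f : ℝ^d → ℝ be differentiable, L-smooth with respect to ‖·‖ (L > 0), bounded below with infimum value f^* attained as a minimum, and suppose f satisfies the Polyak–Łojasiewicz condition with constant μ > 0 with respect to ‖·‖: ‖∇f(x)‖_*² ≥ 2μ (f(x) − f^*) for all x. If (x_t)_{t≥0} is a sequence such that each x_{t+1} minimizes x ↦ ⟨∇f(x_t), x − x_t⟩ + (L/2) ‖x − x_t‖² over ℝ^d, then for every T ≥ 0, f(x_T) − f^* ≤ (1 − μ/L)^T (f(x_0) − f^*). -/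
open scoped BigOperators

/-- The dual norm of a norm `N` on `ℝ^d`: `‖z‖_* = sup_{N x ≤ 1} ⟪z, x⟫`. -/
noncomputable def dualNorm {d : ℕ} (N : EuclideanSpace ℝ (Fin d) → ℝ)
    (z : EuclideanSpace ℝ (Fin d)) : ℝ :=
  sSup ((fun x => (inner ℝ z x : ℝ)) '' {x | N x ≤ 1})

namespace SDPL

variable {d : ℕ} {N : EuclideanSpace ℝ (Fin d) → ℝ}

lemma N_zero (hN_smul : ∀ (c : ℝ) x, N (c • x) = |c| * N x) : N 0 = 0 := by
  simpa using hN_smul 0 0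

lemma N_neg (hN_smul : ∀ (c : ℝ) x, N (c • x) = |c| * N x) (x : EuclideanSpace ℝ (Fin d)) :
    N (-x) = N x := by simpa using hN_smul (-1) x

lemma N_nonneg (hN_smul : ∀ (c : ℝ) x, N (c • x) = |c| * N x)
    (hN_add : ∀ x y, N (x + y) ≤ N x + N y) (x : EuclideanSpace ℝ (Fin d)) : 0 ≤ N x := by
  have h := hN_add x (-x)
  rw [add_neg_cancel, N_zero hN_smul, N_neg hN_smul] at h
  linarith

lemma abs_coord_le_norm (x : EuclideanSpace ℝ (Fin d)) (i : Fin d) : |x i| ≤ ‖x‖ := by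
  have h : |x i| ^ 2 ≤ ∑ j : Fin d, ‖x j‖ ^ 2 := by
    simpa [Real.norm_eq_abs] using Finset.single_le_sum
      (f := fun j => ‖x j‖ ^ 2) (fun j _ => sq_nonneg _) (Finset.mem_univ i)
  calc |x i| = Real.sqrt (|x i| ^ 2) := by rw [Real.sqrt_sq (abs_nonneg _)]
    _ ≤ Real.sqrt (∑ j : Fin d, ‖x j‖ ^ 2) := Real.sqrt_le_sqrt h
    _ = ‖x‖ := (EuclideanSpace.norm_eq x).symm

lemma N_upper (hN_smul : ∀ (c : ℝ) x, N (c • x) = |c| * N x)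
    (hN_add : ∀ x y, N (x + y) ≤ N x + N y) :
    ∃ C : ℝ, 0 ≤ C ∧ ∀ x, N x ≤ C * ‖x‖ := by
  classical
  refine ⟨∑ i : Fin d, N (EuclideanSpace.single i 1), Finset.sum_nonneg fun i _ =>
    N_nonneg hN_smul hN_add _, fun x => ?_⟩
  have hrepr : x = ∑ i : Fin d, x i • EuclideanSpace.single i (1:ℝ) := by
    have := (EuclideanSpace.basisFun (Fin d) ℝ).sum_repr x
    simpa [EuclideanSpace.basisFun_repr, EuclideanSpace.basisFun_apply] using this.symm
  calc N x = N (∑ i : Fin d, x i • EuclideanSpace.single i (1:ℝ)) := by rw [← hrepr]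
    _ ≤ ∑ i : Fin d, N (x i • EuclideanSpace.single i (1:ℝ)) :=
        Finset.le_sum_of_subadditive N (N_zero hN_smul).le hN_add _ _
    _ = ∑ i : Fin d, |x i| * N (EuclideanSpace.single i (1:ℝ)) := by simp [hN_smul]
    _ ≤ ∑ i : Fin d, ‖x‖ * N (EuclideanSpace.single i (1:ℝ)) :=
        Finset.sum_le_sum fun i _ => mul_le_mul_of_nonneg_right (abs_coord_le_norm x i)
          (N_nonneg hN_smul hN_add _)
    _ = (∑ i : Fin d, N (EuclideanSpace.single i 1)) * ‖x‖ := by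
        rw [← Finset.mul_sum, mul_comm]

lemma N_continuous (hN_smul : ∀ (c : ℝ) x, N (c • x) = |c| * N x)
    (hN_add : ∀ x y, N (x + y) ≤ N x + N y) : Continuous N := by
  obtain ⟨C, hC0, hC⟩ := N_upper hN_smul hN_add
  have key : ∀ a b : EuclideanSpace ℝ (Fin d), N a - N b ≤ C * ‖a - b‖ := by
    intro a b
    have h1 := hN_add (a - b) b
    simp only [sub_add_cancel] at h1
    have h2 := hC (a - b)
    linarith
  refine (LipschitzWith.of_dist_le_mul (K := C.toNNReal) (f := N) fun a b => ?_).continuous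
  rw [Real.dist_eq, Real.coe_toNNReal C hC0, dist_eq_norm]
  have h2 := key b a
  rw [norm_sub_rev] at h2
  exact abs_le.mpr ⟨by linarith, key a b⟩

lemma N_lower (hN_def : ∀ x, N x = 0 ↔ x = 0)
    (hN_smul : ∀ (c : ℝ) x, N (c • x) = |c| * N x)
    (hN_add : ∀ x y, N (x + y) ≤ N x + N y) :
    ∃ c : ℝ, 0 < c ∧ ∀ x, c * ‖x‖ ≤ N x := by
  by_cases htriv : ∀ x : EuclideanSpace ℝ (Fin d), x = 0
  · exact ⟨1, one_pos, fun x => by rw [htriv x]; simp [N_zero hN_smul]⟩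
  push_neg at htriv
  obtain ⟨x₀, hx₀⟩ := htriv
  have hsne : (Metric.sphere (0 : EuclideanSpace ℝ (Fin d)) 1).Nonempty := by
    refine ⟨‖x₀‖⁻¹ • x₀, ?_⟩
    simp [norm_smul, abs_inv, inv_mul_cancel₀ (norm_ne_zero_iff.2 hx₀)]
  obtain ⟨m, hm, hmin⟩ := (isCompact_sphere (0 : EuclideanSpace ℝ (Fin d)) 1).exists_isMinOn
    hsne ((N_continuous hN_smul hN_add).continuousOn)
  have hm1 : ‖m‖ = 1 := by simpa using hm
  have hmne : m ≠ 0 := by intro h; rw [h] at hm1; simp at hm1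
  have hc : 0 < N m := by
    rcases lt_or_eq_of_le (N_nonneg hN_smul hN_add m) with h | h
    · exact h
    · exact absurd ((hN_def m).1 h.symm) hmne
  refine ⟨N m, hc, fun x => ?_⟩
  by_cases hx : x = 0
  · simp [hx, N_zero hN_smul]
  · have hxn : (0:ℝ) < ‖x‖ := norm_pos_iff.2 hx
    have hmem : ‖x‖⁻¹ • x ∈ Metric.sphere (0 : EuclideanSpace ℝ (Fin d)) 1 := by
      simp [norm_smul, abs_inv, inv_mul_cancel₀ hxn.ne']
    have h1 := hmin hmem
    simp only [IsMinOn, IsMinFilter] at h1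
    have h2 : N m ≤ N (‖x‖⁻¹ • x) := hmin hmem
    rw [hN_smul, abs_inv, abs_of_pos hxn] at h2
    calc N m * ‖x‖ ≤ ‖x‖⁻¹ * N x * ‖x‖ := mul_le_mul_of_nonneg_right h2 hxn.le
      _ = N x := by field_simp

lemma dual_set_nonempty (hN_smul : ∀ (c : ℝ) x, N (c • x) = |c| * N x)
    (z : EuclideanSpace ℝ (Fin d)) :
    ((fun x => (inner ℝ z x : ℝ)) '' {x | N x ≤ 1}).Nonempty :=
  ⟨(inner ℝ z 0 : ℝ), 0, by simp [N_zero hN_smul], rfl⟩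

lemma dual_bddAbove (hN_def : ∀ x, N x = 0 ↔ x = 0)
    (hN_smul : ∀ (c : ℝ) x, N (c • x) = |c| * N x)
    (hN_add : ∀ x y, N (x + y) ≤ N x + N y) (z : EuclideanSpace ℝ (Fin d)) :
    BddAbove ((fun x => (inner ℝ z x : ℝ)) '' {x | N x ≤ 1}) := by
  obtain ⟨c, hc, hlow⟩ := N_lower hN_def hN_smul hN_add
  refine ⟨‖z‖ * c⁻¹, fun r hr => ?_⟩
  obtain ⟨u, hu, rfl⟩ := hr
  have h0 : c * ‖u‖ ≤ 1 := le_trans (hlow u) hu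
  have h1 : ‖u‖ ≤ c⁻¹ := by
    rw [show c⁻¹ = 1 / c by ring, le_div_iff₀ hc]; linarith [mul_comm c ‖u‖]
  calc (inner ℝ z u : ℝ) ≤ ‖z‖ * ‖u‖ := real_inner_le_norm z u
    _ ≤ ‖z‖ * c⁻¹ := mul_le_mul_of_nonneg_left h1 (norm_nonneg z)

lemma dualNorm_nonneg (hN_def : ∀ x, N x = 0 ↔ x = 0)
    (hN_smul : ∀ (c : ℝ) x, N (c • x) = |c| * N x)
    (hN_add : ∀ x y, N (x + y) ≤ N x + N y) (z : EuclideanSpace ℝ (Fin d)) :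
    0 ≤ dualNorm N z := by
  have h0 : (0:ℝ) ∈ (fun x => (inner ℝ z x : ℝ)) '' {x | N x ≤ 1} :=
    ⟨0, by simp [N_zero hN_smul], by simp⟩
  exact le_csSup (dual_bddAbove hN_def hN_smul hN_add z) h0

lemma inner_le_dualNorm (hN_def : ∀ x, N x = 0 ↔ x = 0)
    (hN_smul : ∀ (c : ℝ) x, N (c • x) = |c| * N x)
    (hN_add : ∀ x y, N (x + y) ≤ N x + N y) (z v : EuclideanSpace ℝ (Fin d)) :
    (inner ℝ z v : ℝ) ≤ dualNorm N z * N v := by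
  by_cases hv : v = 0
  · rw [hv, inner_zero_right, N_zero hN_smul, mul_zero]
  · have hNv : 0 < N v := by
      rcases lt_or_eq_of_le (N_nonneg hN_smul hN_add v) with h | h
      · exact h
      · exact absurd ((hN_def v).1 h.symm) hv
    have hmem : (inner ℝ z ((N v)⁻¹ • v) : ℝ) ∈ (fun x => (inner ℝ z x : ℝ)) '' {x | N x ≤ 1} := by
      refine ⟨(N v)⁻¹ • v, ?_, rfl⟩
      simp only [Set.mem_setOf_eq, hN_smul, abs_inv, abs_of_pos hNv]
      rw [inv_mul_cancel₀ hNv.ne']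
    have hle := le_csSup (dual_bddAbove hN_def hN_smul hN_add z) hmem
    rw [real_inner_smul_right] at hle
    have h2 := mul_le_mul_of_nonneg_right hle hNv.le
    rwa [inv_mul_eq_div, div_mul_cancel₀ _ hNv.ne'] at h2

lemma exists_near_sup (hN_def : ∀ x, N x = 0 ↔ x = 0)
    (hN_smul : ∀ (c : ℝ) x, N (c • x) = |c| * N x)
    (hN_add : ∀ x y, N (x + y) ≤ N x + N y)
    (z : EuclideanSpace ℝ (Fin d)) {ε : ℝ} (hε : 0 < ε) :
    ∃ u, N u ≤ 1 ∧ dualNorm N z - ε < (inner ℝ z u : ℝ) := by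
  have h : dualNorm N z - ε < sSup ((fun x => (inner ℝ z x : ℝ)) '' {x | N x ≤ 1}) := by
    rw [show sSup ((fun x => (inner ℝ z x : ℝ)) '' {x | N x ≤ 1}) = dualNorm N z from rfl]
    linarith
  obtain ⟨r, hr, hlt⟩ := exists_lt_of_lt_csSup (dual_set_nonempty hN_smul z) h
  obtain ⟨u, hu, rfl⟩ := hr
  exact ⟨u, hu, hlt⟩

end SDPL



namespace SDPLtest
variable {d : ℕ}

lemma fderiv_eq_inner_gradient (f : EuclideanSpace ℝ (Fin d) → ℝ)
    (q v : EuclideanSpace ℝ (Fin d)) :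
    fderiv ℝ f q v = (inner ℝ (gradient f q) v : ℝ) := by
  rw [gradient, ← InnerProductSpace.toDual_apply_apply,
    (InnerProductSpace.toDual ℝ _).apply_symm_apply]

lemma line_hasDerivAt (f : EuclideanSpace ℝ (Fin d) → ℝ) (hf : Differentiable ℝ f)
    (p v : EuclideanSpace ℝ (Fin d)) (t : ℝ) :
    HasDerivAt (fun s : ℝ => f (p + s • v)) (inner ℝ (gradient f (p + t • v)) v : ℝ) t := by
  have hline : HasDerivAt (fun s : ℝ => p + s • v) v t := by
    simpa using ((hasDerivAt_id t).smul_const v).const_add p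
  have h := (hf (p + t • v)).hasFDerivAt.comp_hasDerivAt t hline
  rwa [fderiv_eq_inner_gradient] at h

/-- The descent lemma. -/
lemma descent {N : EuclideanSpace ℝ (Fin d) → ℝ}
    (hN_def : ∀ x, N x = 0 ↔ x = 0)
    (hN_smul : ∀ (c : ℝ) x, N (c • x) = |c| * N x)
    (hN_add : ∀ x y, N (x + y) ≤ N x + N y)
    (f : EuclideanSpace ℝ (Fin d) → ℝ) (hf : Differentiable ℝ f) (L : ℝ) (hL : 0 < L)
    (hsmooth : ∀ x x', dualNorm N (gradient f x' - gradient f x) ≤ L * N (x' - x))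
    (p v : EuclideanSpace ℝ (Fin d)) :
    f (p + v) ≤ f p + (inner ℝ (gradient f p) v : ℝ) + L / 2 * (N v) ^ 2 := by
  set D : ℝ := (inner ℝ (gradient f p) v : ℝ) with hD
  set K : ℝ := L * (N v) ^ 2 with hK
  set h : ℝ → ℝ := fun t => f (p + t • v) - t * D - K * t ^ 2 / 2 with hh_def
  have hh : ∀ t : ℝ, HasDerivAt h
      ((inner ℝ (gradient f (p + t • v)) v : ℝ) - D - K * t) t := by
    intro t
    have h1 := line_hasDerivAt f hf p v t
    have h2 : HasDerivAt (fun s : ℝ => s * D) D t := by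
      simpa using (hasDerivAt_id t).mul_const D
    have h3 : HasDerivAt (fun s : ℝ => K * s ^ 2 / 2) (K * t) t := by
      have := ((hasDerivAt_pow 2 t).const_mul K).div_const 2
      refine this.congr_deriv ?_
      ring
    exact (h1.sub h2).sub h3
  have hderiv_nonpos : ∀ t ∈ Set.Ioo (0:ℝ) 1, deriv h t ≤ 0 := by
    intro t ht
    rw [(hh t).deriv]
    have hpair : (inner ℝ (gradient f (p + t • v) - gradient f p) v : ℝ)
        ≤ dualNorm N (gradient f (p + t • v) - gradient f p) * N v :=
      SDPL.inner_le_dualNorm hN_def hN_smul hN_add _ _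
    have hsm := hsmooth p (p + t • v)
    rw [add_sub_cancel_left, hN_smul, abs_of_pos ht.1] at hsm
    have hNv : 0 ≤ N v := SDPL.N_nonneg hN_smul hN_add v
    have hsub : (inner ℝ (gradient f (p + t • v) - gradient f p) v : ℝ)
        = (inner ℝ (gradient f (p + t • v)) v : ℝ) - D := by
      rw [inner_sub_left]
    have hKt : K * t = L * (t * N v) * N v := by rw [hK]; ring
    linarith [mul_le_mul_of_nonneg_right hsm hNv, hpair, hsub.le, hsub.ge]
  have hcont : ContinuousOn h (Set.Icc (0:ℝ) 1) :=
    fun t _ => ((hh t).differentiableAt.continuousAt).continuousWithinAt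
  have hdiff : DifferentiableOn ℝ h (interior (Set.Icc (0:ℝ) 1)) :=
    fun t _ => ((hh t).differentiableAt).differentiableWithinAt
  have hanti : AntitoneOn h (Set.Icc (0:ℝ) 1) := by
    apply antitoneOn_of_deriv_nonpos (convex_Icc 0 1) hcont hdiff
    intro t ht
    rw [interior_Icc] at ht
    exact hderiv_nonpos t ht
  have h10 : h 1 ≤ h 0 := hanti (Set.left_mem_Icc.2 zero_le_one)
    (Set.right_mem_Icc.2 zero_le_one) zero_le_one
  simp only [hh_def, one_smul, zero_smul, add_zero, one_pow, mul_one, zero_mul,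
    zero_pow, mul_zero, sub_zero] at h10
  have : f (p + v) - D - K / 2 ≤ f p := by
    convert h10 using 2 <;> ring_nf
  have hK2 : K / 2 = L / 2 * (N v) ^ 2 := by rw [hK]; ring
  linarith [this, hK2.symm.le]

end SDPLtest



namespace SDPLtest2
variable {d : ℕ}

lemma model_le {N : EuclideanSpace ℝ (Fin d) → ℝ}
    (hN_def : ∀ x, N x = 0 ↔ x = 0)
    (hN_smul : ∀ (c : ℝ) x, N (c • x) = |c| * N x)
    (hN_add : ∀ x y, N (x + y) ≤ N x + N y)
    (L : ℝ) (hL : 0 < L) (z p : EuclideanSpace ℝ (Fin d)) {δ : ℝ} (hδ : 0 < δ) :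
    ∃ y, (inner ℝ z (y - p) : ℝ) + L / 2 * (N (y - p)) ^ 2
      ≤ -(dualNorm N z) ^ 2 / (2 * L) + δ := by
  set D : ℝ := dualNorm N z with hDdef
  have hD0 : 0 ≤ D := SDPL.dualNorm_nonneg hN_def hN_smul hN_add z
  rcases eq_or_lt_of_le hD0 with hD | hD
  · refine ⟨p, ?_⟩
    simp only [sub_self, inner_zero_right, SDPL.N_zero hN_smul]
    rw [← hD]
    norm_num
    linarith
  · have hε : 0 < L * δ / D := by positivity
    obtain ⟨u, hu1, hu2⟩ := SDPL.exists_near_sup hN_def hN_smul hN_add z hε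
    set ε : ℝ := L * δ / D with hεdef
    refine ⟨p - (D / L) • u, ?_⟩
    have hyp : p - (D / L) • u - p = -((D / L) • u) := by abel
    rw [hyp, inner_neg_right, real_inner_smul_right, SDPL.N_neg hN_smul, hN_smul,
      abs_of_nonneg (div_nonneg hD0 hL.le)]
    have hNu0 : 0 ≤ N u := SDPL.N_nonneg hN_smul hN_add u
    have ha : 0 ≤ D / L := div_nonneg hD0 hL.le
    have h1 : -(D / L * (inner ℝ z u : ℝ)) ≤ -(D / L * (D - ε)) := by
      have := mul_le_mul_of_nonneg_left (le_of_lt hu2) ha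
      linarith
    have hq : (D / L * N u) ^ 2 ≤ (D / L) ^ 2 := by
      have : D / L * N u ≤ D / L * 1 := mul_le_mul_of_nonneg_left hu1 ha
      nlinarith [mul_nonneg ha hNu0]
    have h2 : L / 2 * (D / L * N u) ^ 2 ≤ L / 2 * (D / L) ^ 2 :=
      mul_le_mul_of_nonneg_left hq (by linarith)
    have hkey : -(D / L * (D - ε)) + L / 2 * (D / L) ^ 2 = -D ^ 2 / (2 * L) + δ := by
      rw [hεdef]
      field_simp
      ring
    linarith
end SDPLtest2



namespace SDPLX
lemma le_of_eps {a b : ℝ} (h : ∀ δ : ℝ, 0 < δ → a ≤ b + δ) : a ≤ b := by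
  by_contra hc
  push_neg at hc
  have := h ((a - b) / 2) (by linarith)
  linarith
end SDPLX


/-- If `f` is `L`-smooth w.r.t. a norm `N`, attains its global minimum value `fstar`,
satisfies the Polyak–Łojasiewicz condition `‖∇f(x)‖_*² ≥ 2μ (f(x) - fstar)` with `μ > 0`,
and `(x t)` is a steepest descent sequence, then
`f(x T) - fstar ≤ (1 - μ/L)^T (f(x 0) - fstar)` for every `T`. -/
theorem steepest_descent_convergence_pl {d : ℕ} (N : EuclideanSpace ℝ (Fin d) → ℝ)
    (hN_def : ∀ x, N x = 0 ↔ x = 0)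
    (hN_smul : ∀ (c : ℝ) x, N (c • x) = |c| * N x)
    (hN_add : ∀ x y, N (x + y) ≤ N x + N y)
    (f : EuclideanSpace ℝ (Fin d) → ℝ) (hf : Differentiable ℝ f) (L : ℝ) (hL : 0 < L)
    (hsmooth : ∀ x x', dualNorm N (gradient f x' - gradient f x) ≤ L * N (x' - x))
    (fstar : ℝ) (hbdd : ∀ x, fstar ≤ f x) (hatt : ∃ x, f x = fstar)
    (μ : ℝ) (hμ : 0 < μ)
    (hpl : ∀ x, 2 * μ * (f x - fstar) ≤ (dualNorm N (gradient f x)) ^ 2)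
    (x : ℕ → EuclideanSpace ℝ (Fin d))
    (hmin : ∀ t, ∀ y, (inner ℝ (gradient f (x t)) (x (t + 1) - x t) : ℝ)
        + L / 2 * (N (x (t + 1) - x t)) ^ 2
      ≤ (inner ℝ (gradient f (x t)) (y - x t) : ℝ) + L / 2 * (N (y - x t)) ^ 2) :
    ∀ T : ℕ, f (x T) - fstar ≤ (1 - μ / L) ^ T * (f (x 0) - fstar) := by

  have hstep : ∀ t : ℕ,
      f (x (t + 1)) ≤ f (x t) - (dualNorm N (gradient f (x t))) ^ 2 / (2 * L) := by
    intro t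
    apply SDPLX.le_of_eps
    intro δ hδ
    obtain ⟨y, hy⟩ := SDPLtest2.model_le hN_def hN_smul hN_add L hL (gradient f (x t)) (x t) hδ
    have hdesc := SDPLtest.descent hN_def hN_smul hN_add f hf L hL hsmooth (x t)
      (x (t + 1) - x t)
    have he : x t + (x (t + 1) - x t) = x (t + 1) := by abel
    rw [he] at hdesc
    have hmodel := hmin t y
    rw [neg_div] at hy
    linarith
  have hglob : ∀ p, (dualNorm N (gradient f p)) ^ 2 / (2 * L) ≤ f p - fstar := by
    intro p
    apply SDPLX.le_of_eps
    intro δ hδ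
    obtain ⟨y, hy⟩ := SDPLtest2.model_le hN_def hN_smul hN_add L hL (gradient f p) p hδ
    have hdesc := SDPLtest.descent hN_def hN_smul hN_add f hf L hL hsmooth p (y - p)
    have he : p + (y - p) = y := by abel
    rw [he] at hdesc
    have := hbdd y
    rw [neg_div] at hy
    linarith
  by_cases hall : ∀ p, f p = fstar
  · intro T
    rw [hall (x T), hall (x 0)]
    simp
  · push_neg at hall
    obtain ⟨p, hp⟩ := hall
    have hps : fstar < f p := lt_of_le_of_ne (hbdd p) (Ne.symm hp)
    have hμL : μ ≤ L := by
      have h1 := hglob p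
      have h2 := hpl p
      have h3 : dualNorm N (gradient f p) ^ 2 ≤ 2 * L * (f p - fstar) := by
        rw [div_le_iff₀ (by positivity)] at h1
        linarith
      by_contra hc
      push_neg at hc
      have h4 : L * (f p - fstar) < μ * (f p - fstar) :=
        mul_lt_mul_of_pos_right hc (by linarith)
      linarith
    have hfac : 0 ≤ 1 - μ / L := by
      have : μ / L ≤ 1 := (div_le_one hL).2 hμL
      linarith
    intro T
    induction T with
    | zero => simp
    | succ T ih =>
      have hs := hstep T
      have hp2 := hpl (x T)
      have hD2 : μ / L * (f (x T) - fstar)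
          ≤ (dualNorm N (gradient f (x T))) ^ 2 / (2 * L) := by
        have h4 : (2 * μ * (f (x T) - fstar)) / (2 * L)
            ≤ (dualNorm N (gradient f (x T))) ^ 2 / (2 * L) := by gcongr
        have h5 : (2 * μ * (f (x T) - fstar)) / (2 * L) = μ / L * (f (x T) - fstar) := by
          field_simp
        linarith
      have h5 : f (x (T + 1)) - fstar ≤ (1 - μ / L) * (f (x T) - fstar) := by nlinarith [hs, hD2]
      calc f (x (T + 1)) - fstar ≤ (1 - μ / L) * (f (x T) - fstar) := h5
        _ ≤ (1 - μ / L) * ((1 - μ / L) ^ T * (f (x 0) - fstar)) :=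
            mul_le_mul_of_nonneg_left ih hfac
        _ = (1 - μ / L) ^ (T + 1) * (f (x 0) - fstar) := by ring
end

section
/- Let ‖·‖ be a norm on ℝ^d with dual norm ‖·‖_*, and for a d×d matrix H let ‖H‖ := max_{‖x‖ ≤ 1} ‖H x‖_*. Let f : ℝ^d → ℝ be twice continuously differentiable and (L⁰, L¹)-relaxed smooth with respect to ‖·‖, i.e. ‖∇²f(x)‖ ≤ L⁰ + L¹ ‖∇f(x)‖_* for all x, with L⁰ ≥ 0 and L¹ > 0. Then for any x, x' ∈ ℝ^d with ‖x' − x‖ ≤ 1/L¹, one has ‖∇f(x')‖_* ≤ 4 (L⁰/L¹ + ‖∇f(x)‖_*). -/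
open scoped BigOperators

/-- The matrix norm induced by a norm `N` on `ℝ^d`: `‖H‖ = max_{N x ≤ 1} ‖H x‖_*`,
for a linear map `H` on `ℝ^d`. -/
noncomputable def inducedMatrixNorm {d : ℕ} (N : EuclideanSpace ℝ (Fin d) → ℝ)
    (H : EuclideanSpace ℝ (Fin d) →L[ℝ] EuclideanSpace ℝ (Fin d)) : ℝ :=
  sSup ((fun x => dualNorm N (H x)) '' {x | N x ≤ 1})

variable {d : ℕ}

section Nfacts
variable {N : EuclideanSpace ℝ (Fin d) → ℝ}
  (hN_smul : ∀ (c : ℝ) x, N (c • x) = |c| * N x)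
  (hN_add : ∀ x y, N (x + y) ≤ N x + N y)

include hN_smul in
lemma N_zero : N (0 : EuclideanSpace ℝ (Fin d)) = 0 := by simpa using hN_smul 0 0

include hN_smul in
lemma N_neg (x : EuclideanSpace ℝ (Fin d)) : N (-x) = N x := by
  rw [show (-x : EuclideanSpace ℝ (Fin d)) = (-1:ℝ) • x by simp, hN_smul]; simp

include hN_smul hN_add in
lemma N_nonneg (x : EuclideanSpace ℝ (Fin d)) : 0 ≤ N x := by
  have h := hN_add x (-x)
  rw [add_neg_cancel, N_zero hN_smul, N_neg hN_smul] at h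
  linarith

include hN_smul hN_add in
lemma N_sum_le {ι : Type*} (s : Finset ι) (g : ι → EuclideanSpace ℝ (Fin d)) :
    N (∑ i ∈ s, g i) ≤ ∑ i ∈ s, N (g i) := by
  classical
  induction s using Finset.induction with
  | empty => simp [N_zero hN_smul]
  | insert _ _ hni ih =>
    rename_i a s
    rw [Finset.sum_insert hni, Finset.sum_insert hni]
    exact le_trans (hN_add _ _) (by linarith)

include hN_smul hN_add in
lemma N_upper : ∃ C : ℝ, 0 < C ∧ ∀ x : EuclideanSpace ℝ (Fin d), N x ≤ C * ‖x‖ := by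
  classical
  set C : ℝ := (∑ i, N (EuclideanSpace.single i (1:ℝ))) + 1 with hC
  have hCpos : 0 < C := by
    have : 0 ≤ ∑ i, N (EuclideanSpace.single i (1:ℝ)) :=
      Finset.sum_nonneg fun i _ => N_nonneg hN_smul hN_add _
    positivity
  refine ⟨C, hCpos, fun x => ?_⟩
  have hx : x = ∑ i, (x i) • EuclideanSpace.single i (1:ℝ) := by
    have := (EuclideanSpace.basisFun (Fin d) ℝ).sum_repr x
    simp only [EuclideanSpace.basisFun_apply] at this
    exact this.symm
  calc N x ≤ ∑ i, N ((x i) • EuclideanSpace.single i (1:ℝ)) := by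
        conv_lhs => rw [hx]
        exact N_sum_le hN_smul hN_add _ _
    _ = ∑ i, |x i| * N (EuclideanSpace.single i (1:ℝ)) := by
        simp [hN_smul]
    _ ≤ ∑ i, ‖x‖ * N (EuclideanSpace.single i (1:ℝ)) := by
        refine Finset.sum_le_sum fun i _ => ?_
        have h1 : |x i| ≤ ‖x‖ := by
          rw [EuclideanSpace.norm_eq, show |x i| = Real.sqrt ((x i)^2) by rw [Real.sqrt_sq_eq_abs]]
          apply Real.sqrt_le_sqrt
          simp only [Real.norm_eq_abs, sq_abs]
          exact Finset.single_le_sum (f := fun j => (x j)^2) (fun j _ => sq_nonneg _)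
            (Finset.mem_univ i)
        exact mul_le_mul_of_nonneg_right h1 (N_nonneg hN_smul hN_add _)
    _ = (∑ i, N (EuclideanSpace.single i (1:ℝ))) * ‖x‖ := by
        rw [← Finset.mul_sum]; ring
    _ ≤ C * ‖x‖ := by
        have := norm_nonneg x; nlinarith

end Nfacts

section Nlower
variable {N : EuclideanSpace ℝ (Fin d) → ℝ}
  (hN_def : ∀ x : EuclideanSpace ℝ (Fin d), N x = 0 ↔ x = 0)
  (hN_smul : ∀ (c : ℝ) x, N (c • x) = |c| * N x)
  (hN_add : ∀ x y, N (x + y) ≤ N x + N y)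

include hN_smul hN_add in
lemma N_continuous : Continuous N := by
  obtain ⟨C, hCpos, hC⟩ := N_upper hN_smul hN_add
  refine (LipschitzWith.of_dist_le_mul (K := ⟨C, hCpos.le⟩) fun x y => ?_).continuous
  have h1 : N x ≤ N y + N (x - y) := by
    have := hN_add y (x - y); simpa using this
  have h2 : N y ≤ N x + N (y - x) := by
    have := hN_add x (y - x); simpa using this
  have h3 : N (y - x) = N (x - y) := by
    rw [show y - x = -(x - y) by abel, N_neg hN_smul]
  have h4 : N (x - y) ≤ C * ‖x - y‖ := hC _
  rw [Real.dist_eq, abs_le, dist_eq_norm]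
  show -(C * ‖x - y‖) ≤ N x - N y ∧ N x - N y ≤ C * ‖x - y‖
  constructor <;> [linarith [h2, h3.symm ▸ h4]; linarith [h1, h4]]

include hN_def hN_smul hN_add in
lemma N_lower : ∃ c : ℝ, 0 < c ∧ ∀ x : EuclideanSpace ℝ (Fin d), c * ‖x‖ ≤ N x := by
  have N_zero : N 0 = 0 := N_zero hN_smul
  have N_nonneg : ∀ x : EuclideanSpace ℝ (Fin d), 0 ≤ N x := N_nonneg hN_smul hN_add
  have N_cont : Continuous N := N_continuous hN_smul hN_add
  by_cases hd : ∃ x : EuclideanSpace ℝ (Fin d), x ≠ 0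
  · obtain ⟨x₀, hx₀⟩ := hd
    have hsph : (Metric.sphere (0:EuclideanSpace ℝ (Fin d)) 1).Nonempty := by
      refine ⟨‖x₀‖⁻¹ • x₀, ?_⟩
      simp [norm_smul, abs_inv, inv_mul_cancel₀ (norm_ne_zero_iff.mpr hx₀)]
    obtain ⟨z, hz, hzmin⟩ := (isCompact_sphere (0:EuclideanSpace ℝ (Fin d)) 1).exists_isMinOn hsph
      N_cont.continuousOn
    have hznorm : ‖z‖ = 1 := by simpa using hz
    have hzne : z ≠ 0 := by
      intro h; rw [h] at hznorm; simp at hznorm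
    have hc : 0 < N z := by
      rcases lt_or_eq_of_le (N_nonneg z) with h | h
      · exact h
      · exact absurd ((hN_def z).mp h.symm) hzne
    refine ⟨N z, hc, fun x => ?_⟩
    rcases eq_or_ne x 0 with rfl | hx
    · simp [N_zero]
    · have hxn : (0:ℝ) < ‖x‖ := norm_pos_iff.mpr hx
      have hmem : (‖x‖⁻¹ • x) ∈ Metric.sphere (0:EuclideanSpace ℝ (Fin d)) 1 := by
        simp [norm_smul, abs_inv, inv_mul_cancel₀ hxn.ne']
      have h5 : N z ≤ N (‖x‖⁻¹ • x) := hzmin hmem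
      have heq : N (‖x‖⁻¹ • x) = ‖x‖⁻¹ * N x := by
        rw [hN_smul]; congr 1; rw [abs_inv, abs_norm]
      rw [heq] at h5
      calc N z * ‖x‖ ≤ (‖x‖⁻¹ * N x) * ‖x‖ := by nlinarith
        _ = N x := by field_simp
  · push_neg at hd
    exact ⟨1, one_pos, fun x => by simp [hd x, N_zero]⟩
end Nlower

section Dual
variable {N : EuclideanSpace ℝ (Fin d) → ℝ} {c : ℝ}
  (hc : 0 < c) (hlow : ∀ x : EuclideanSpace ℝ (Fin d), c * ‖x‖ ≤ N x)
  (hNz : N 0 = 0)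

include hc hlow in
lemma norm_le_invc {x : EuclideanSpace ℝ (Fin d)} (hx : N x ≤ 1) : ‖x‖ ≤ c⁻¹ := by
  have h1 : c * ‖x‖ ≤ 1 := (hlow x).trans hx
  have h2 : c * c⁻¹ = 1 := mul_inv_cancel₀ hc.ne'
  nlinarith

include hc hlow in
lemma dual_bddAbove (z : EuclideanSpace ℝ (Fin d)) :
    BddAbove ((fun x => (inner ℝ z x : ℝ)) '' {x | N x ≤ 1}) := by
  refine ⟨‖z‖ * c⁻¹, fun y hy => ?_⟩
  obtain ⟨x, hx, rfl⟩ := hy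
  have hxb : ‖x‖ ≤ c⁻¹ := norm_le_invc hc hlow hx
  calc (inner ℝ z x : ℝ) ≤ ‖z‖ * ‖x‖ := real_inner_le_norm z x
    _ ≤ ‖z‖ * c⁻¹ := mul_le_mul_of_nonneg_left hxb (norm_nonneg z)

include hc hlow in
lemma inner_le_dual {x z : EuclideanSpace ℝ (Fin d)} (hx : N x ≤ 1) :
    (inner ℝ z x : ℝ) ≤ dualNorm N z :=
  le_csSup (dual_bddAbove hc hlow z) ⟨x, hx, rfl⟩

include hNz in
lemma dual_le {z : EuclideanSpace ℝ (Fin d)} {B : ℝ}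
    (hB : ∀ x, N x ≤ 1 → (inner ℝ z x : ℝ) ≤ B) : dualNorm N z ≤ B := by
  refine csSup_le ⟨(inner ℝ z 0 : ℝ), ⟨0, by simp [hNz], rfl⟩⟩ ?_
  rintro y ⟨x, hx, rfl⟩
  exact hB x hx

include hc hlow hNz in
lemma dual_nonneg (z : EuclideanSpace ℝ (Fin d)) : 0 ≤ dualNorm N z := by
  have h := inner_le_dual hc hlow (z := z) (x := 0) (by simp [hNz] : N 0 ≤ 1)
  simpa using h

include hc hlow hNz in
lemma dual_zero : dualNorm N (0 : EuclideanSpace ℝ (Fin d)) = 0 :=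
  le_antisymm (dual_le hNz fun x _ => by simp) (dual_nonneg hc hlow hNz 0)

include hc hlow hNz in
lemma dual_le_norm (z : EuclideanSpace ℝ (Fin d)) : dualNorm N z ≤ c⁻¹ * ‖z‖ := by
  refine dual_le hNz fun x hx => ?_
  calc (inner ℝ z x : ℝ) ≤ ‖z‖ * ‖x‖ := real_inner_le_norm z x
    _ ≤ ‖z‖ * c⁻¹ := mul_le_mul_of_nonneg_left (norm_le_invc hc hlow hx) (norm_nonneg z)
    _ = c⁻¹ * ‖z‖ := by ring

include hc hlow hNz in
lemma dual_add (z w : EuclideanSpace ℝ (Fin d)) :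
    dualNorm N (z + w) ≤ dualNorm N z + dualNorm N w := by
  refine dual_le hNz fun x hx => ?_
  rw [inner_add_left]
  exact add_le_add (inner_le_dual hc hlow hx) (inner_le_dual hc hlow hx)

include hc hlow hNz in
lemma dual_smul (a : ℝ) (ha : 0 ≤ a) (z : EuclideanSpace ℝ (Fin d)) :
    dualNorm N (a • z) = a * dualNorm N z := by
  rcases eq_or_lt_of_le ha with rfl | ha
  · simp [dual_zero hc hlow hNz]
  · apply le_antisymm
    · refine dual_le hNz fun x hx => ?_
      rw [real_inner_smul_left]
      exact mul_le_mul_of_nonneg_left (inner_le_dual hc hlow hx) ha.le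
    · have h : dualNorm N z ≤ a⁻¹ * dualNorm N (a • z) := by
        refine dual_le hNz fun x hx => ?_
        have h2 := inner_le_dual hc hlow (z := a • z) hx
        rw [real_inner_smul_left] at h2
        calc (inner ℝ z x : ℝ) = a⁻¹ * (a * (inner ℝ z x : ℝ)) := by field_simp
          _ ≤ a⁻¹ * dualNorm N (a • z) :=
            mul_le_mul_of_nonneg_left h2 (by positivity)
      calc a * dualNorm N z ≤ a * (a⁻¹ * dualNorm N (a • z)) :=
            mul_le_mul_of_nonneg_left h ha.le
        _ = dualNorm N (a • z) := by field_simp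

include hc hlow hNz in
lemma dual_lipschitz (z w : EuclideanSpace ℝ (Fin d)) :
    dualNorm N z - dualNorm N w ≤ c⁻¹ * ‖z - w‖ := by
  have h1 : dualNorm N z ≤ dualNorm N w + dualNorm N (z - w) := by
    have := dual_add hc hlow hNz w (z - w)
    simpa using this
  have h2 := dual_le_norm hc hlow hNz (z - w)
  linarith

include hc hlow hNz in
lemma dual_continuous : Continuous (dualNorm N) := by
  refine (LipschitzWith.of_dist_le_mul (K := ⟨c⁻¹, by positivity⟩) fun z w => ?_).continuous
  rw [Real.dist_eq, abs_le, dist_eq_norm]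
  show -(c⁻¹ * ‖z - w‖) ≤ dualNorm N z - dualNorm N w ∧ dualNorm N z - dualNorm N w ≤ c⁻¹ * ‖z - w‖
  have h1 := dual_lipschitz hc hlow hNz z w
  have h2 := dual_lipschitz hc hlow hNz w z
  rw [show w - z = -(z - w) by abel, norm_neg] at h2
  constructor <;> linarith

end Dual

section IMN
variable {N : EuclideanSpace ℝ (Fin d) → ℝ} {c : ℝ}
  (hc : 0 < c) (hlow : ∀ x : EuclideanSpace ℝ (Fin d), c * ‖x‖ ≤ N x)
  (hNz : N 0 = 0)
  (hN_def : ∀ x : EuclideanSpace ℝ (Fin d), N x = 0 ↔ x = 0)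
  (hN_smul : ∀ (a : ℝ) x, N (a • x) = |a| * N x)

include hc hlow hNz in
lemma imn_bddAbove (H : EuclideanSpace ℝ (Fin d) →L[ℝ] EuclideanSpace ℝ (Fin d)) :
    BddAbove ((fun x => dualNorm N (H x)) '' {x | N x ≤ 1}) := by
  refine ⟨c⁻¹ * (‖H‖ * c⁻¹), fun y hy => ?_⟩
  obtain ⟨x, hx, rfl⟩ := hy
  calc dualNorm N (H x) ≤ c⁻¹ * ‖H x‖ := dual_le_norm hc hlow hNz _
    _ ≤ c⁻¹ * (‖H‖ * ‖x‖) := by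
        refine mul_le_mul_of_nonneg_left (H.le_opNorm x) (by positivity)
    _ ≤ c⁻¹ * (‖H‖ * c⁻¹) := by
        refine mul_le_mul_of_nonneg_left
          (mul_le_mul_of_nonneg_left (norm_le_invc hc hlow hx) (norm_nonneg _)) (by positivity)

include hc hlow hNz in
lemma dual_apply_le_imn (H : EuclideanSpace ℝ (Fin d) →L[ℝ] EuclideanSpace ℝ (Fin d))
    {u : EuclideanSpace ℝ (Fin d)} (hu : N u ≤ 1) :
    dualNorm N (H u) ≤ inducedMatrixNorm N H :=
  le_csSup (imn_bddAbove hc hlow hNz H) ⟨u, hu, rfl⟩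

include hc hlow hNz hN_def hN_smul in
lemma dual_apply_le (H : EuclideanSpace ℝ (Fin d) →L[ℝ] EuclideanSpace ℝ (Fin d))
    (u : EuclideanSpace ℝ (Fin d)) :
    dualNorm N (H u) ≤ inducedMatrixNorm N H * N u := by
  rcases eq_or_ne (N u) 0 with h0 | h0
  · have hu0 : u = 0 := (hN_def u).mp h0
    subst hu0
    rw [h0, mul_zero, map_zero, dual_zero hc hlow hNz]
  · have hNu : 0 < N u := by
      rcases lt_or_eq_of_le (by
        have := hlow u; nlinarith [norm_nonneg u] : (0:ℝ) ≤ N u) with h | h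
      · exact h
      · exact absurd h.symm h0
    have hmem : N ((N u)⁻¹ • u) ≤ 1 := by
      rw [hN_smul, abs_inv, abs_of_pos hNu, inv_mul_cancel₀ hNu.ne']
    have heq : H u = (N u) • H ((N u)⁻¹ • u) := by
      rw [map_smul, smul_smul, mul_inv_cancel₀ hNu.ne', one_smul]
    rw [heq, dual_smul hc hlow hNz _ hNu.le]
    rw [mul_comm (inducedMatrixNorm N H)]
    exact mul_le_mul_of_nonneg_left (dual_apply_le_imn hc hlow hNz H hmem) hNu.le

include hc hlow hNz in
lemma imn_nonneg (H : EuclideanSpace ℝ (Fin d) →L[ℝ] EuclideanSpace ℝ (Fin d)) :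
    0 ≤ inducedMatrixNorm N H := by
  have hmem : dualNorm N (H 0) ∈ ((fun x => dualNorm N (H x)) '' {x | N x ≤ 1}) :=
    ⟨0, by simp [hNz], rfl⟩
  have h := le_csSup (imn_bddAbove hc hlow hNz H) hmem
  rw [map_zero, dual_zero hc hlow hNz] at h
  exact h

end IMN

section Grad
variable {f : EuclideanSpace ℝ (Fin d) → ℝ}

lemma grad_contDiff (hf : ContDiff ℝ 2 f) : ContDiff ℝ 1 (gradient f) := by
  have h1 : ContDiff ℝ 1 (fderiv ℝ f) := hf.fderiv_right (by norm_num)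
  have h2 : gradient f = fun x =>
      (InnerProductSpace.toDual ℝ (EuclideanSpace ℝ (Fin d))).symm (fderiv ℝ f x) := rfl
  rw [h2]
  exact ((InnerProductSpace.toDual ℝ (EuclideanSpace ℝ (Fin d))).symm.contDiff).comp h1

lemma grad_ftc (hf : ContDiff ℝ 2 f) (a b : EuclideanSpace ℝ (Fin d)) :
    gradient f b - gradient f a
      = ∫ t in (0:ℝ)..1, (fderiv ℝ (gradient f) (a + t • (b - a))) (b - a) := by
  have hg := grad_contDiff hf
  have hline : ∀ t : ℝ, HasDerivAt (fun s : ℝ => a + s • (b - a)) (b - a) t := by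
    intro t
    simpa using ((hasDerivAt_id t).smul_const (b - a)).const_add a
  have hcurve : ∀ t : ℝ, HasDerivAt (fun s : ℝ => gradient f (a + s • (b - a)))
      ((fderiv ℝ (gradient f) (a + t • (b - a))) (b - a)) t := by
    intro t
    exact ((hg.differentiable one_ne_zero _).hasFDerivAt).comp_hasDerivAt t (hline t)
  have hcont : Continuous fun t : ℝ => (fderiv ℝ (gradient f) (a + t • (b - a))) (b - a) := by
    refine Continuous.clm_apply ?_ continuous_const
    exact (hg.continuous_fderiv one_ne_zero).comp (by continuity)
  rw [intervalIntegral.integral_eq_sub_of_hasDerivAt (fun t _ => hcurve t)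
    (hcont.intervalIntegrable 0 1)]
  simp

end Grad

section Bound
variable {N : EuclideanSpace ℝ (Fin d) → ℝ} {c : ℝ}
  (hc : 0 < c) (hlow : ∀ x : EuclideanSpace ℝ (Fin d), c * ‖x‖ ≤ N x)
  (hNz : N 0 = 0)
variable {f : EuclideanSpace ℝ (Fin d) → ℝ}

lemma grad_curve_cont (hf : ContDiff ℝ 2 f) (a v : EuclideanSpace ℝ (Fin d)) :
    Continuous fun t : ℝ => (fderiv ℝ (gradient f) (a + t • v)) v := by
  refine Continuous.clm_apply ?_ continuous_const
  exact ((grad_contDiff hf).continuous_fderiv one_ne_zero).comp (by continuity)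

include hc hlow hNz in
lemma grad_diff_bound (hf : ContDiff ℝ 2 f) (a b : EuclideanSpace ℝ (Fin d)) (M : ℝ)
    (hseg : ∀ t ∈ Set.Icc (0:ℝ) 1,
      dualNorm N ((fderiv ℝ (gradient f) (a + t • (b - a))) (b - a)) ≤ M) :
    dualNorm N (gradient f b - gradient f a) ≤ M := by
  set φ : ℝ → EuclideanSpace ℝ (Fin d) :=
    fun t => (fderiv ℝ (gradient f) (a + t • (b - a))) (b - a) with hφ
  have hcontφ : Continuous φ := grad_curve_cont hf a (b - a)
  refine dual_le hNz fun x hx => ?_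
  rw [grad_ftc hf a b]
  have hint : MeasureTheory.IntegrableOn φ (Set.Ioc (0:ℝ) 1) MeasureTheory.volume :=
    hcontφ.integrableOn_Ioc
  have h1 : (inner ℝ (∫ t in (0:ℝ)..1, φ t) x : ℝ) = ∫ t in (0:ℝ)..1, (inner ℝ (φ t) x : ℝ) := by
    rw [real_inner_comm, intervalIntegral.integral_of_le zero_le_one,
      intervalIntegral.integral_of_le zero_le_one, ← integral_inner hint x]
    refine MeasureTheory.integral_congr_ae (Filter.Eventually.of_forall fun t => ?_)
    exact real_inner_comm _ _
  rw [h1]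
  have h2 : (∫ t in (0:ℝ)..1, (inner ℝ (φ t) x : ℝ)) ≤ ∫ _t in (0:ℝ)..1, M := by
    refine intervalIntegral.integral_mono_on zero_le_one
      ((hcontφ.inner continuous_const).intervalIntegrable 0 1)
      (intervalIntegrable_const) fun t ht => ?_
    exact le_trans (inner_le_dual hc hlow hx) (hseg t ht)
  simpa using h2

end Bound

section Key
variable {N : EuclideanSpace ℝ (Fin d) → ℝ} {c : ℝ}
  (hc : 0 < c) (hlow : ∀ x : EuclideanSpace ℝ (Fin d), c * ‖x‖ ≤ N x)
  (hNz : N 0 = 0)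
  (hN_def : ∀ x : EuclideanSpace ℝ (Fin d), N x = 0 ↔ x = 0)
  (hN_smul : ∀ (a : ℝ) x, N (a • x) = |a| * N x)
  (hN_add : ∀ x y : EuclideanSpace ℝ (Fin d), N (x + y) ≤ N x + N y)
variable {f : EuclideanSpace ℝ (Fin d) → ℝ}

include hc hlow hNz in
lemma dual_triangle (z w : EuclideanSpace ℝ (Fin d)) :
    dualNorm N z ≤ dualNorm N w + dualNorm N (z - w) := by
  have h : z = w + (z - w) := by abel
  calc dualNorm N z = dualNorm N (w + (z - w)) := by rw [← h]
    _ ≤ dualNorm N w + dualNorm N (z - w) := dual_add hc hlow hNz _ _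

include hc hlow hNz hN_def hN_smul hN_add in
set_option maxHeartbeats 1000000 in
lemma key_step (hf : ContDiff ℝ 2 f) (L0 L1 : ℝ) (hL0 : 0 ≤ L0) (hL1 : 0 < L1)
    (hrelax : ∀ y, inducedMatrixNorm N (fderiv ℝ (gradient f) y)
      ≤ L0 + L1 * dualNorm N (gradient f y))
    (x v : EuclideanSpace ℝ (Fin d)) (hv : N v ≤ 1 / (2 * L1)) :
    dualNorm N (gradient f (x + v)) ≤ 2 * dualNorm N (gradient f x) + L0 / L1 := by
  set g : EuclideanSpace ℝ (Fin d) → ℝ := fun y => dualNorm N (gradient f y) with hg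
  have hNv : 0 ≤ N v := by nlinarith [hlow v, norm_nonneg v]
  have hcont : Continuous fun s : ℝ => g (x + s • v) := by
    exact (dual_continuous hc hlow hNz).comp
      (((grad_contDiff hf).continuous).comp (by continuity))
  obtain ⟨t0, ht0, hmax⟩ := isCompact_Icc.exists_isMaxOn (Set.nonempty_Icc.mpr zero_le_one)
    hcont.continuousOn
  set G : ℝ := g (x + t0 • v) with hG
  have hGmax : ∀ s ∈ Set.Icc (0:ℝ) 1, g (x + s • v) ≤ G := fun s hs => hmax hs
  have hG0 : 0 ≤ G := dual_nonneg hc hlow hNz _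
  have hgx0 : 0 ≤ g x := dual_nonneg hc hlow hNz _
  have hkey : ∀ s ∈ Set.Icc (0:ℝ) 1, g (x + s • v) ≤ g x + (L0 + L1 * G) * N v := by
    intro s hs
    obtain ⟨hs0, hs1⟩ := hs
    have hb : (x + s • v) - x = s • v := by abel
    have hseg : ∀ t ∈ Set.Icc (0:ℝ) 1,
        dualNorm N ((fderiv ℝ (gradient f) (x + t • ((x + s • v) - x))) ((x + s • v) - x))
          ≤ (L0 + L1 * G) * N v := by
      intro t ht
      obtain ⟨ht0', ht1⟩ := ht
      rw [hb]
      have hpt : x + t • s • v = x + (t * s) • v := by rw [mul_smul]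
      have hts : t * s ∈ Set.Icc (0:ℝ) 1 := ⟨by positivity, by nlinarith⟩
      have h1 : dualNorm N ((fderiv ℝ (gradient f) (x + t • s • v)) (s • v))
          ≤ inducedMatrixNorm N (fderiv ℝ (gradient f) (x + t • s • v)) * N (s • v) :=
        dual_apply_le hc hlow hNz hN_def hN_smul _ _
      have h2 : inducedMatrixNorm N (fderiv ℝ (gradient f) (x + t • s • v))
          ≤ L0 + L1 * G := by
        refine le_trans (hrelax _) ?_
        have := hGmax (t * s) hts
        rw [← hpt] at this
        nlinarith
      have h3 : N (s • v) ≤ N v := by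
        rw [hN_smul, abs_of_nonneg hs0]
        nlinarith
      have himn0 : 0 ≤ inducedMatrixNorm N (fderiv ℝ (gradient f) (x + t • s • v)) :=
        imn_nonneg hc hlow hNz _
      have hNsv : 0 ≤ N (s • v) := by nlinarith [hlow (s • v), norm_nonneg (s • v)]
      nlinarith
    have hstep := grad_diff_bound hc hlow hNz hf x (x + s • v) ((L0 + L1 * G) * N v) hseg
    have htri := dual_triangle hc hlow hNz (gradient f (x + s • v)) (gradient f x)
    simp only [hg]
    linarith
  have hGle : G ≤ g x + (L0 + L1 * G) * N v := hkey t0 ht0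
  have hmul : (L0 + L1 * G) * N v ≤ (L0 + L1 * G) * (1 / (2 * L1)) := by
    have : 0 ≤ L0 + L1 * G := by positivity
    nlinarith
  have hGbound : G ≤ 2 * g x + L0 / L1 := by
    have h := hGle.trans (by linarith : g x + (L0 + L1 * G) * N v ≤ g x + (L0 + L1 * G) * (1 / (2 * L1)))
    have hexp : (L0 + L1 * G) * (1 / (2 * L1)) = L0 / (2 * L1) + G / 2 := by
      field_simp
    rw [hexp] at h
    have hd2 : L0 / (2 * L1) * 2 = L0 / L1 := by field_simp
    linarith
  have hfin : g (x + v) ≤ G := by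
    have := hGmax 1 ⟨zero_le_one, le_rfl⟩
    simpa using this
  calc dualNorm N (gradient f (x + v)) = g (x + v) := rfl
    _ ≤ G := hfin
    _ ≤ 2 * dualNorm N (gradient f x) + L0 / L1 := hGbound

end Key

/-- If `f` is twice continuously differentiable and `(L⁰, L¹)`-relaxed smooth w.r.t. a norm
`N`, i.e. `‖∇²f(x)‖ ≤ L⁰ + L¹ ‖∇f(x)‖_*` for all `x`, then for `N(x' - x) ≤ 1/L¹` one has
`‖∇f(x')‖_* ≤ 4 (L⁰/L¹ + ‖∇f(x)‖_*)`. -/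
theorem relaxed_smoothness_gradient_growth {d : ℕ}
    (N : EuclideanSpace ℝ (Fin d) → ℝ)
    (hN_def : ∀ x, N x = 0 ↔ x = 0)
    (hN_smul : ∀ (c : ℝ) x, N (c • x) = |c| * N x)
    (hN_add : ∀ x y, N (x + y) ≤ N x + N y)
    (f : EuclideanSpace ℝ (Fin d) → ℝ) (hf : ContDiff ℝ 2 f)
    (L0 L1 : ℝ) (hL0 : 0 ≤ L0) (hL1 : 0 < L1)
    (hrelax : ∀ x, inducedMatrixNorm N (fderiv ℝ (gradient f) x)
      ≤ L0 + L1 * dualNorm N (gradient f x)) :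
    ∀ x x' : EuclideanSpace ℝ (Fin d), N (x' - x) ≤ 1 / L1 →
      dualNorm N (gradient f x') ≤ 4 * (L0 / L1 + dualNorm N (gradient f x)) := by
  obtain ⟨c, hc, hlow⟩ := N_lower hN_def hN_smul hN_add
  have hNz : N 0 = 0 := N_zero hN_smul
  intro x x' h
  have hv1 : N ((2⁻¹ : ℝ) • (x' - x)) ≤ 1 / (2 * L1) := by
    rw [hN_smul]
    have : |(2⁻¹ : ℝ)| = 2⁻¹ := by norm_num
    rw [this]
    rw [show (1 : ℝ) / (2 * L1) = 2⁻¹ * (1 / L1) by ring]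
    have hN0 : 0 ≤ N (x' - x) := by nlinarith [hlow (x' - x), norm_nonneg (x' - x)]
    nlinarith
  have step1 := key_step hc hlow hNz hN_def hN_smul hN_add hf L0 L1 hL0 hL1 hrelax
    x ((2⁻¹ : ℝ) • (x' - x)) hv1
  have hmeq : (x + (2⁻¹ : ℝ) • (x' - x)) + (2⁻¹ : ℝ) • (x' - x) = x' := by
    rw [add_assoc, ← add_smul]
    norm_num
  have step2 := key_step hc hlow hNz hN_def hN_smul hN_add hf L0 L1 hL0 hL1 hrelax
    (x + (2⁻¹ : ℝ) • (x' - x)) ((2⁻¹ : ℝ) • (x' - x)) hv1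
  rw [hmeq] at step2
  have hq : 0 ≤ L0 / L1 := by positivity
  linarith
end
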